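/- arXiv:2009.11849 — 2 statements merged into one kernel-verified Lean document; each statement's English description precedes it below -/
import Mathlib

section
/- For every rooted tree T and every complex symmetric n×n matrix K, one has K ∈ L_T^⊥ if and only if A_T · p(K) = 0 (where p(K) is viewed as a column vector indexed by the 2-element subsets of {0,…,n}). Consequently, for complex symmetric n×n matrices K and W, K − W ∈ L_T^⊥ if and only if A_T · p(K) = A_T · p(W). -/
attribute [local instance] Classical.propDecidable

/-- A rooted tree on leaves `0, …, n`, rooted at the leaf `0`, with all edges directed
away from the root, no vertices of degree two, together with its (uniquely determined)
most-recent-common-ancestor function `lca` on leaf labels.  The parent map `par` sends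
every non-root vertex to the vertex its unique incoming edge comes from, and fixes the
root.  A vertex `u` is a descendant of `v` iff some iterate of `par` sends `u` to `v`. -/
structure PhyloTree where
  n : ℕ
  hn : 1 ≤ n
  V : Type
  fintypeV : Fintype V
  leaf : Fin (n + 1) ↪ V
  par : V → V
  par_root : par (leaf 0) = leaf 0
  par_ne : ∀ v : V, v ≠ leaf 0 → par v ≠ v
  reaches_root : ∀ v : V, ∃ k : ℕ, par^[k] v = leaf 0
  leaf_iff : ∀ v : V, v ≠ leaf 0 → (v ∈ Set.range leaf ↔ ∀ u, par u ≠ v)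
  root_unique_child : ∃! u : V, u ≠ leaf 0 ∧ par u = leaf 0
  no_degree_two : ∀ v : V, v ∉ Set.range leaf → ∃ u w : V, u ≠ w ∧ par u = v ∧ par w = v
  lca : Fin (n + 1) → Fin (n + 1) → V
  lca_anc_left : ∀ i j, ∃ k : ℕ, par^[k] (leaf i) = lca i j
  lca_anc_right : ∀ i j, ∃ k : ℕ, par^[k] (leaf j) = lca i j
  lca_min : ∀ i j (w : V), (∃ k : ℕ, par^[k] (leaf i) = w) →
      (∃ k : ℕ, par^[k] (leaf j) = w) → ∃ k : ℕ, par^[k] (lca i j) = w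

instance (T : PhyloTree) : Fintype T.V := T.fintypeV

/-- `T.isAnc v u` : `v` is an ancestor of `u`, i.e. `u` is a descendant of `v`
(every vertex is a descendant of itself). -/
def PhyloTree.isAnc (T : PhyloTree) (v u : T.V) : Prop := ∃ k : ℕ, T.par^[k] u = v

/-- The 2-element subsets `{i,j}` of `{0, …, n}`, encoded as ordered pairs `i < j`. -/
abbrev PairIdx (n : ℕ) := {q : Fin (n + 1) × Fin (n + 1) // q.1 < q.2}

/-- The non-root vertices of `T`; these index the rows of `A_T`, and are also in
bijection `v ↦ e(v)` with the edges of `T`, so they also index the rows of `B_T`. -/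
abbrev PhyloTree.NR (T : PhyloTree) := {v : T.V // v ≠ T.leaf 0}

/-- The matrix `A_T`, with rows indexed by non-root vertices and columns indexed by
2-element subsets `{i,j}` of `{0, …, n}`: the entry is `1` if `v = i`, `v = j` or
`v = lca(i,j)`, and `0` otherwise. -/
noncomputable def Amat (T : PhyloTree) (R : Type*) [Zero R] [One R] :
    Matrix T.NR (PairIdx T.n) R :=
  Matrix.of fun v s =>
    if v.1 = T.leaf s.1.1 ∨ v.1 = T.leaf s.1.2 ∨ v.1 = T.lca s.1.1 s.1.2 then 1 else 0

/-- `T.onPath v i j` : the edge `e(v)` lies on the unique path between the leaves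
`i` and `j`, i.e. `v` lies strictly below `lca(i,j)` on the segment from `lca(i,j)`
down to `i` or on the segment from `lca(i,j)` down to `j`. -/
def PhyloTree.onPath (T : PhyloTree) (v : T.V) (i j : Fin (T.n + 1)) : Prop :=
  v ≠ T.lca i j ∧ T.isAnc (T.lca i j) v ∧ (T.isAnc v (T.leaf i) ∨ T.isAnc v (T.leaf j))

/-- The matrix `B_T`, with rows indexed by the edges `e(v)` of `T` (equivalently, by the
non-root vertices `v`) and columns indexed by 2-element subsets `{i,j}` of `{0, …, n}`:
the entry is `1` if `e(v) ∈ P(i,j)` and `0` otherwise. -/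
noncomputable def Bmat (T : PhyloTree) (R : Type*) [Zero R] [One R] :
    Matrix T.NR (PairIdx T.n) R :=
  Matrix.of fun v s => if T.onPath v.1 s.1.1 s.1.2 then 1 else 0

/-- The monomial map `φ_M` associated to a nonnegative-integer matrix `M`, sending
`p_c` to `∏_r t_r ^ M(r,c)`. -/
noncomputable def toricMap {R C : Type*} [Fintype R] (M : Matrix R C ℕ) :
    MvPolynomial C ℂ →ₐ[ℂ] MvPolynomial R ℂ :=
  MvPolynomial.aeval fun c => ∏ r : R, MvPolynomial.X r ^ M r c
/-- The linear change of coordinates `p(K)` on symmetric matrices: `p_{ij} = -k_{ij}`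
for `1 ≤ i < j ≤ n` and `p_{0i} = ∑_{j=1}^n k_{ij}`.  Here a symmetric matrix `K` has
rows and columns indexed by the non-root leaves `1, …, n`, i.e. the entry `k_{ij}`
(for `1 ≤ i, j ≤ n`) is `K (i-1) (j-1)`. -/
noncomputable def pvec (T : PhyloTree) (K : Matrix (Fin T.n) (Fin T.n) ℂ) :
    PairIdx T.n → ℂ := fun s =>
  if h : s.1.1 = 0 then
    ∑ k : Fin T.n, K (s.1.2.pred (Fin.pos_iff_ne_zero.mp (lt_of_le_of_lt (Fin.zero_le _) s.2))) k
  else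
    -K (s.1.1.pred h) (s.1.2.pred (Fin.pos_iff_ne_zero.mp (lt_of_le_of_lt (Fin.zero_le _) s.2)))

/-- The linear space `L_T` of complex symmetric `n × n` matrices `Σ = (σ_{ij})`, with rows
and columns indexed by the non-root leaves `1, …, n`, such that `σ_{ij} = σ_{kl}` whenever
`lca(i,j) = lca(k,l)`.  Here row `i : Fin n` corresponds to the leaf label `i.succ`. -/
def Lspace (T : PhyloTree) : Set (Matrix (Fin T.n) (Fin T.n) ℂ) :=
  {S | S.IsSymm ∧ ∀ i j k l : Fin T.n,
      T.lca i.succ j.succ = T.lca k.succ l.succ → S i j = S k l}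

/-- The orthogonal complement `L_T^⊥` of `L_T` inside the space of complex symmetric
`n × n` matrices, with respect to the pairing `⟨A, B⟩ = trace (A * B)`. -/
def LspacePerp (T : PhyloTree) : Set (Matrix (Fin T.n) (Fin T.n) ℂ) :=
  {K | K.IsSymm ∧ ∀ S ∈ Lspace T, (K * S).trace = 0}

open scoped Matrix
namespace PhyloTree
variable (T : PhyloTree)

lemma root_fix (k : ℕ) : T.par^[k] (T.leaf 0) = T.leaf 0 :=
  Function.iterate_fixed T.par_root k

lemma anc_antisymm {u v : T.V} (a b : ℕ) (ha : T.par^[a] v = u) (hb : T.par^[b] u = v) :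
    u = v := by
  rcases Nat.eq_zero_or_pos (a + b) with h0 | hpos
  · have : a = 0 := by omega
    subst this; exact ha.symm
  · obtain ⟨d, hd⟩ := T.reaches_root u
    have hcyc : T.par^[a+b] u = u := by
      rw [Function.iterate_add_apply, hb, ha]
    have hmd : T.par^[(a+b)*d] u = u := by
      rw [Function.iterate_mul]; exact Function.iterate_fixed hcyc d
    have hroot : u = T.leaf 0 := by
      calc u = T.par^[(a+b)*d] u := hmd.symm
        _ = T.par^[(a+b)*d - d] (T.par^[d] u) := by
            rw [← Function.iterate_add_apply]; congr 1
            have := Nat.le_mul_of_pos_left d hpos; omega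
        _ = T.leaf 0 := by rw [hd, T.root_fix]
    rw [hroot] at hb ⊢
    rw [T.root_fix] at hb
    exact hb

lemma lca_symm (i j : Fin (T.n + 1)) : T.lca i j = T.lca j i := by
  obtain ⟨a, ha⟩ := T.lca_min j i (T.lca i j) (T.lca_anc_right i j) (T.lca_anc_left i j)
  obtain ⟨b, hb⟩ := T.lca_min i j (T.lca j i) (T.lca_anc_right j i) (T.lca_anc_left j i)
  exact T.anc_antisymm a b ha hb

lemma lca_self (i : Fin (T.n + 1)) : T.lca i i = T.leaf i := by
  obtain ⟨a, ha⟩ := T.lca_anc_left i i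
  obtain ⟨b, hb⟩ := T.lca_min i i (T.leaf i) ⟨0, rfl⟩ ⟨0, rfl⟩
  exact T.anc_antisymm a b ha hb

lemma lca_zero_left (j : Fin (T.n + 1)) : T.lca 0 j = T.leaf 0 := by
  obtain ⟨a, ha⟩ := T.lca_anc_left 0 j
  rw [T.root_fix] at ha; exact ha.symm

lemma desc_leaf {i : Fin (T.n + 1)} (hi : i ≠ 0) {u : T.V} {k : ℕ}
    (h : T.par^[k] u = T.leaf i) : u = T.leaf i := by
  cases k with
  | zero => exact h
  | succ k =>
    exfalso
    have hne : T.leaf i ≠ T.leaf 0 := fun he => hi (T.leaf.injective he)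
    have hnp := (T.leaf_iff (T.leaf i) hne).mp ⟨i, rfl⟩
    rw [Function.iterate_succ_apply'] at h
    exact hnp _ h

lemma lca_leaf {i j m : Fin (T.n + 1)} (hm : m ≠ 0) (h : T.lca i j = T.leaf m) :
    i = m ∧ j = m := by
  obtain ⟨a, ha⟩ := T.lca_anc_left i j
  obtain ⟨b, hb⟩ := T.lca_anc_right i j
  rw [h] at ha hb
  exact ⟨T.leaf.injective (T.desc_leaf hm ha), T.leaf.injective (T.desc_leaf hm hb)⟩

lemma lca_ne_root {i j : Fin (T.n + 1)} (hi : i ≠ 0) (hj : j ≠ 0) :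
    T.lca i j ≠ T.leaf 0 := by
  obtain ⟨c, hc, hcu⟩ := T.root_unique_child
  have anc_c : ∀ v : T.V, v ≠ T.leaf 0 → ∃ k, T.par^[k] v = c := by
    intro v hv
    have hex : ∃ k, T.par^[k] v = T.leaf 0 := T.reaches_root v
    have hkpos : Nat.find hex ≠ 0 := by
      intro h0
      have := Nat.find_spec hex
      rw [h0] at this
      exact hv this
    obtain ⟨k', hk'⟩ := Nat.exists_eq_succ_of_ne_zero hkpos
    refine ⟨k', hcu _ ⟨fun hroot => ?_, ?_⟩⟩
    · exact Nat.find_min hex (by omega) hroot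
    · have hs := Nat.find_spec hex
      rw [hk', Function.iterate_succ_apply'] at hs; exact hs
  intro hroot
  obtain ⟨k, hk⟩ := T.lca_min i j c
    (anc_c _ (fun h => hi (T.leaf.injective h))) (anc_c _ (fun h => hj (T.leaf.injective h)))
  rw [hroot, T.root_fix] at hk
  exact hc.1 hk.symm

end PhyloTree
namespace PhyloAux

lemma snd_ne_zero {n : ℕ} (s : PairIdx n) : s.1.2 ≠ 0 :=
  Fin.pos_iff_ne_zero.mp (lt_of_le_of_lt (Fin.zero_le _) s.2)

noncomputable def pairEquiv (n : ℕ) :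
    (Fin n ⊕ {q : Fin n × Fin n // q.1 < q.2}) ≃ PairIdx n where
  toFun x := match x with
    | .inl a => ⟨(0, a.succ), Fin.succ_pos a⟩
    | .inr t => ⟨(t.1.1.succ, t.1.2.succ), Fin.succ_lt_succ_iff.mpr t.2⟩
  invFun s :=
    if h : s.1.1 = 0 then
      .inl (s.1.2.pred (snd_ne_zero s))
    else
      .inr ⟨(s.1.1.pred h, s.1.2.pred (snd_ne_zero s)), (@Fin.pred_lt_pred_iff _ _ _ h (snd_ne_zero s)).mpr s.2⟩
  left_inv x := by
    match x with
    | .inl a => simp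
    | .inr ⟨⟨a, b⟩, h⟩ => simp [Fin.succ_ne_zero]
  right_inv s := by
    dsimp only
    by_cases h : s.1.1 = 0
    · rw [dif_pos h]
      apply Subtype.ext
      apply Prod.ext <;> simp [h.symm, Fin.succ_pred]
    · rw [dif_neg h]
      apply Subtype.ext
      apply Prod.ext
      · exact Fin.succ_pred _ h
      · exact Fin.succ_pred _ (snd_ne_zero s)

lemma sum_pairIdx {n : ℕ} (g : PairIdx n → ℂ) :
    ∑ s : PairIdx n, g s =
      (∑ a : Fin n, g ⟨(0, a.succ), Fin.succ_pos a⟩) +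
      ∑ t : {q : Fin n × Fin n // q.1 < q.2},
        g ⟨(t.1.1.succ, t.1.2.succ), Fin.succ_lt_succ_iff.mpr t.2⟩ := by
  rw [← Equiv.sum_comp (pairEquiv n) g, Fintype.sum_sum_type]
  simp only [pairEquiv, Equiv.coe_fn_mk]

lemma sum_lt {n : ℕ} (F : Fin n × Fin n → ℂ) :
    (∑ t : {q : Fin n × Fin n // q.1 < q.2}, F t.1) =
      ∑ a : Fin n, ∑ b : Fin n, if a < b then F (a, b) else 0 := by
  classical
  rw [← Finset.sum_subtype (Finset.univ.filter fun q : Fin n × Fin n => q.1 < q.2)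
      (by simp) F]
  rw [Finset.sum_filter, Fintype.sum_prod_type]

lemma sum_ite_const {P : Prop} [Decidable P] {n : ℕ} (f : Fin n → ℂ) :
    (∑ b : Fin n, if P then f b else 0) = if P then ∑ b : Fin n, f b else 0 := by
  split_ifs <;> simp

lemma pvec_zero (T : PhyloTree) (K : Matrix (Fin T.n) (Fin T.n) ℂ) (a : Fin T.n)
    (h : ((0 : Fin (T.n + 1)), a.succ).1 < ((0 : Fin (T.n + 1)), a.succ).2) :
    pvec T K ⟨(0, a.succ), h⟩ = ∑ k, K a k := by
  simp [pvec]

lemma pvec_succ (T : PhyloTree) (K : Matrix (Fin T.n) (Fin T.n) ℂ) (a b : Fin T.n)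
    (h : (a.succ, b.succ).1 < (a.succ, b.succ).2) :
    pvec T K ⟨(a.succ, b.succ), h⟩ = -K a b := by
  simp [pvec, Fin.succ_ne_zero]

end PhyloAux
namespace PhyloAux

noncomputable def fsum (T : PhyloTree) (K : Matrix (Fin T.n) (Fin T.n) ℂ) (u : T.V) : ℂ :=
  ∑ a : Fin T.n, ∑ b : Fin T.n, if T.lca a.succ b.succ = u then K a b else 0

noncomputable def s1 (T : PhyloTree) (K : Matrix (Fin T.n) (Fin T.n) ℂ) (u : T.V) : ℂ :=
  ∑ a : Fin T.n, ∑ b : Fin T.n, if a < b ∧ T.lca a.succ b.succ = u then K a b else 0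

lemma fsum_eq_filter (T : PhyloTree) (K : Matrix (Fin T.n) (Fin T.n) ℂ) (u : T.V) :
    fsum T K u = ∑ p ∈ Finset.univ.filter
      (fun p : Fin T.n × Fin T.n => T.lca p.1.succ p.2.succ = u), K p.1 p.2 := by
  rw [Finset.sum_filter, Fintype.sum_prod_type, fsum]

lemma perp_iff (T : PhyloTree) (K : Matrix (Fin T.n) (Fin T.n) ℂ) (hK : K.IsSymm) :
    K ∈ LspacePerp T ↔ ∀ u : T.V, fsum T K u = 0 := by
  constructor
  · intro h u
    set S : Matrix (Fin T.n) (Fin T.n) ℂ :=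
      Matrix.of fun i j => if T.lca i.succ j.succ = u then 1 else 0 with hSdef
    have hS : S ∈ Lspace T := by
      constructor
      · ext i j
        show S j i = S i j
        simp only [hSdef, Matrix.of_apply]
        rw [T.lca_symm j.succ i.succ]
      · intro i j k l hl
        simp only [hSdef, Matrix.of_apply]
        rw [hl]
    have htr := h.2 S hS
    have : (K * S).trace = fsum T K u := by
      rw [Matrix.trace]
      simp only [Matrix.diag_apply, Matrix.mul_apply, hSdef, Matrix.of_apply]
      rw [fsum]
      apply Finset.sum_congr rfl
      intro i _
      apply Finset.sum_congr rfl
      intro j _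
      rw [mul_ite, mul_one, mul_zero, T.lca_symm j.succ i.succ]
    rw [← this, htr]
  · intro hf
    refine ⟨hK, fun S hS => ?_⟩
    have htr : (K * S).trace =
        ∑ p : Fin T.n × Fin T.n, K p.1 p.2 * S p.2 p.1 := by
      rw [Matrix.trace, Fintype.sum_prod_type]
      simp only [Matrix.diag_apply, Matrix.mul_apply]
    rw [htr, ← Finset.sum_fiberwise Finset.univ
      (fun p : Fin T.n × Fin T.n => T.lca p.1.succ p.2.succ)
      (fun p => K p.1 p.2 * S p.2 p.1)]
    apply Finset.sum_eq_zero
    intro u _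
    rcases (Finset.univ.filter
        (fun p : Fin T.n × Fin T.n => T.lca p.1.succ p.2.succ = u)).eq_empty_or_nonempty
      with he | ⟨⟨a, b⟩, hab⟩
    · rw [he, Finset.sum_empty]
    · have hlab : T.lca a.succ b.succ = u := (Finset.mem_filter.mp hab).2
      have hconst : ∀ p ∈ Finset.univ.filter
          (fun p : Fin T.n × Fin T.n => T.lca p.1.succ p.2.succ = u),
          S p.2 p.1 = S a b := by
        intro p hp
        have hlp : T.lca p.1.succ p.2.succ = T.lca a.succ b.succ := by
          rw [hlab, (Finset.mem_filter.mp hp).2]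
        rw [hS.1.apply p.1 p.2]
        exact hS.2 p.1 p.2 a b hlp
      calc (∑ p ∈ Finset.univ.filter
              (fun p : Fin T.n × Fin T.n => T.lca p.1.succ p.2.succ = u),
            K p.1 p.2 * S p.2 p.1)
          = ∑ p ∈ Finset.univ.filter
              (fun p : Fin T.n × Fin T.n => T.lca p.1.succ p.2.succ = u),
            K p.1 p.2 * S a b :=
            Finset.sum_congr rfl (fun p hp => by rw [hconst p hp])
        _ = (∑ p ∈ Finset.univ.filter
              (fun p : Fin T.n × Fin T.n => T.lca p.1.succ p.2.succ = u),
            K p.1 p.2) * S a b := (Finset.sum_mul _ _ _).symm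
        _ = 0 := by rw [← fsum_eq_filter, hf u, zero_mul]

end PhyloAux
namespace PhyloAux

lemma row_eq (T : PhyloTree) (K : Matrix (Fin T.n) (Fin T.n) ℂ) (v : T.NR) :
    (Amat T ℂ *ᵥ pvec T K) v =
      (∑ a : Fin T.n, if v.1 = T.leaf a.succ then ∑ k, K a k else 0)
      - ∑ a : Fin T.n, ∑ b : Fin T.n,
          if a < b ∧ (v.1 = T.leaf a.succ ∨ v.1 = T.leaf b.succ ∨
            v.1 = T.lca a.succ b.succ) then K a b else 0 := by
  have step1 : (Amat T ℂ *ᵥ pvec T K) v =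
      ∑ s : PairIdx T.n,
        if v.1 = T.leaf s.1.1 ∨ v.1 = T.leaf s.1.2 ∨ v.1 = T.lca s.1.1 s.1.2
        then pvec T K s else 0 := by
    rw [Matrix.mulVec, dotProduct]
    apply Finset.sum_congr rfl
    intro s _
    simp only [Amat, Matrix.of_apply]
    rw [ite_mul, one_mul, zero_mul]
  rw [step1, sum_pairIdx, sub_eq_add_neg]
  congr 1
  · apply Finset.sum_congr rfl
    intro a _
    rw [pvec_zero]
    refine if_congr ?_ rfl rfl
    rw [T.lca_zero_left]
    constructor
    · rintro (h | h | h)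
      · exact absurd h v.2
      · exact h
      · exact absurd h v.2
    · intro h; exact Or.inr (Or.inl h)
  · have step2 : ∀ t : {q : Fin T.n × Fin T.n // q.1 < q.2},
        (if v.1 = T.leaf (t.1.1.succ, t.1.2.succ).1 ∨
            v.1 = T.leaf (t.1.1.succ, t.1.2.succ).2 ∨
            v.1 = T.lca (t.1.1.succ, t.1.2.succ).1 (t.1.1.succ, t.1.2.succ).2
          then pvec T K ⟨(t.1.1.succ, t.1.2.succ), Fin.succ_lt_succ_iff.mpr t.2⟩ else 0)
          = (fun q : Fin T.n × Fin T.n =>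
              if v.1 = T.leaf q.1.succ ∨ v.1 = T.leaf q.2.succ ∨
                v.1 = T.lca q.1.succ q.2.succ then -K q.1 q.2 else 0) t.1 := by
      intro t
      rw [pvec_succ]
    rw [Finset.sum_congr rfl (fun t _ => step2 t),
      sum_lt (fun q : Fin T.n × Fin T.n =>
        if v.1 = T.leaf q.1.succ ∨ v.1 = T.leaf q.2.succ ∨
          v.1 = T.lca q.1.succ q.2.succ then -K q.1 q.2 else 0)]
    rw [← Finset.sum_neg_distrib]
    apply Finset.sum_congr rfl
    intro a _
    rw [← Finset.sum_neg_distrib]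
    apply Finset.sum_congr rfl
    intro b _
    by_cases h1 : a < b
    · by_cases h2 : v.1 = T.leaf a.succ ∨ v.1 = T.leaf b.succ ∨ v.1 = T.lca a.succ b.succ
      · rw [if_pos h1, if_pos h2, if_pos (⟨h1, h2⟩ : _ ∧ _)]
      · rw [if_pos h1, if_neg h2, if_neg (fun h : _ ∧ _ => h2 h.2), neg_zero]
    · rw [if_neg h1, if_neg (fun h : _ ∧ _ => h1 h.1), neg_zero]

end PhyloAux
namespace PhyloAux

lemma row_leaf (T : PhyloTree) (K : Matrix (Fin T.n) (Fin T.n) ℂ) (hK : K.IsSymm)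
    (v : T.NR) (m : Fin T.n) (hv : v.1 = T.leaf m.succ) :
    (Amat T ℂ *ᵥ pvec T K) v = K m m := by
  rw [row_eq]
  have hfirst : (∑ a : Fin T.n, if v.1 = T.leaf a.succ then ∑ k, K a k else 0)
      = ∑ k, K m k := by
    have : ∀ a : Fin T.n, (if v.1 = T.leaf a.succ then ∑ k, K a k else 0)
        = if a = m then ∑ k, K a k else 0 := by
      intro a
      refine if_congr ?_ rfl rfl
      rw [hv]
      constructor
      · intro h
        exact (Fin.succ_injective _ (T.leaf.injective h)).symm
      · rintro rfl; rfl
    rw [Finset.sum_congr rfl (fun a _ => this a), Finset.sum_ite_eq' Finset.univ m]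
    simp
  rw [hfirst]
  have key : ∀ a b : Fin T.n,
      (if a < b ∧ (v.1 = T.leaf a.succ ∨ v.1 = T.leaf b.succ ∨
        v.1 = T.lca a.succ b.succ) then K a b else 0)
      = (if a < b ∧ a = m then K a b else 0) + (if a < b ∧ b = m then K a b else 0) := by
    intro a b
    by_cases h1 : a < b
    · have hlca : ¬ v.1 = T.lca a.succ b.succ := by
        rw [hv]
        intro h
        obtain ⟨ha, hb⟩ := T.lca_leaf (Fin.succ_ne_zero m) h.symm
        rw [Fin.succ_injective _ ha, Fin.succ_injective _ hb] at h1
        exact lt_irrefl _ h1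
      by_cases ham : a = m
      · have hbm : ¬ b = m := by
          intro h
          rw [ham, h] at h1
          exact lt_irrefl m h1
        have hva : v.1 = T.leaf a.succ := by rw [ham]; exact hv
        rw [if_pos ⟨h1, Or.inl hva⟩, if_pos ⟨h1, ham⟩,
          if_neg (fun h : _ ∧ _ => hbm h.2), add_zero]
      · by_cases hbm : b = m
        · have hvb : v.1 = T.leaf b.succ := by rw [hbm]; exact hv
          rw [if_pos ⟨h1, Or.inr (Or.inl hvb)⟩, if_neg (fun h : _ ∧ _ => ham h.2),
            if_pos ⟨h1, hbm⟩, zero_add]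
        · have : ¬ (v.1 = T.leaf a.succ ∨ v.1 = T.leaf b.succ ∨
              v.1 = T.lca a.succ b.succ) := by
            rintro (h | h | h)
            · exact ham (Fin.succ_injective _ (T.leaf.injective (hv.symm.trans h))).symm
            · exact hbm (Fin.succ_injective _ (T.leaf.injective (hv.symm.trans h))).symm
            · exact hlca h
          rw [if_neg (fun h : _ ∧ _ => this h.2), if_neg (fun h : _ ∧ _ => ham h.2),
            if_neg (fun h : _ ∧ _ => hbm h.2), add_zero]
    · rw [if_neg (fun h : _ ∧ _ => h1 h.1), if_neg (fun h : _ ∧ _ => h1 h.1),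
        if_neg (fun h : _ ∧ _ => h1 h.1), add_zero]
  have hsplit := Finset.sum_congr rfl
    (fun a (_ : a ∈ Finset.univ) => Finset.sum_congr rfl
      (fun b (_ : b ∈ Finset.univ) => key a b))
  rw [hsplit]
  have splitAB : (∑ a : Fin T.n, ∑ b : Fin T.n,
      ((if a < b ∧ a = m then K a b else 0) + (if a < b ∧ b = m then K a b else 0)))
      = (∑ a : Fin T.n, ∑ b : Fin T.n, if a < b ∧ a = m then K a b else 0)
        + ∑ a : Fin T.n, ∑ b : Fin T.n, if a < b ∧ b = m then K a b else 0 := by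
    rw [← Finset.sum_add_distrib]
    exact Finset.sum_congr rfl (fun a _ => Finset.sum_add_distrib)
  have eA : (∑ a : Fin T.n, ∑ b : Fin T.n, if a < b ∧ a = m then K a b else 0)
      = ∑ b : Fin T.n, if m < b then K m b else 0 := by
    have pt : ∀ a b : Fin T.n, (if a < b ∧ a = m then K a b else 0)
        = if a = m then (if a < b then K a b else 0) else 0 := fun a b => by
      by_cases hp : a < b <;> by_cases hq : a = m <;> simp [hp, hq]
    rw [Finset.sum_congr rfl (fun a _ => Finset.sum_congr rfl (fun b _ => pt a b))]
    rw [Finset.sum_congr rfl (fun a (_ : a ∈ Finset.univ) =>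
      sum_ite_const (fun b => if a < b then K a b else 0))]
    rw [Finset.sum_ite_eq' Finset.univ m]
    simp
  have eB : (∑ a : Fin T.n, ∑ b : Fin T.n, if a < b ∧ b = m then K a b else 0)
      = ∑ a : Fin T.n, if a < m then K a m else 0 := by
    have pt : ∀ a b : Fin T.n, (if a < b ∧ b = m then K a b else 0)
        = if b = m then (if a < b then K a b else 0) else 0 := fun a b => by
      by_cases hp : a < b <;> by_cases hq : b = m <;> simp [hp, hq]
    rw [Finset.sum_congr rfl (fun a _ => Finset.sum_congr rfl (fun b _ => pt a b))]
    refine Finset.sum_congr rfl (fun a _ => ?_)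
    rw [Finset.sum_ite_eq' Finset.univ m (fun b => if a < b then K a b else 0)]
    simp
  rw [splitAB, eA, eB]
  have final : (∑ k, K m k) - ((∑ b : Fin T.n, if m < b then K m b else 0)
      + ∑ a : Fin T.n, if a < m then K a m else 0) = K m m := by
    rw [← Finset.sum_add_distrib, ← Finset.sum_sub_distrib]
    have pt : ∀ k : Fin T.n, K m k - ((if m < k then K m k else 0)
        + (if k < m then K k m else 0)) = if k = m then K m k else 0 := by
      intro k
      rcases lt_trichotomy k m with h | h | h
      · rw [if_neg (asymm h), if_pos h, if_neg (ne_of_lt h), hK.apply m k]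
        ring
      · subst h
        rw [if_neg (lt_irrefl k), if_pos rfl]
        ring
      · rw [if_pos h, if_neg (asymm h), if_neg (ne_of_gt h)]
        ring
    rw [Finset.sum_congr rfl (fun k _ => pt k), Finset.sum_ite_eq' Finset.univ m]
    simp
  exact final

end PhyloAux
namespace PhyloAux

lemma fsum_leaf (T : PhyloTree) (K : Matrix (Fin T.n) (Fin T.n) ℂ) (m : Fin T.n) :
    fsum T K (T.leaf m.succ) = K m m := by
  rw [fsum]
  have pt : ∀ a b : Fin T.n, (if T.lca a.succ b.succ = T.leaf m.succ then K a b else 0)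
      = if a = m then (if b = m then K a b else 0) else 0 := by
    intro a b
    rw [← ite_and]
    refine if_congr ?_ rfl rfl
    constructor
    · intro h
      obtain ⟨ha, hb⟩ := T.lca_leaf (Fin.succ_ne_zero m) h
      exact ⟨Fin.succ_injective _ ha, Fin.succ_injective _ hb⟩
    · rintro ⟨rfl, rfl⟩
      exact T.lca_self _
  rw [Finset.sum_congr rfl (fun a _ => Finset.sum_congr rfl (fun b _ => pt a b))]
  rw [Finset.sum_congr rfl (fun a (_ : a ∈ Finset.univ) =>
    sum_ite_const (fun b => if b = m then K a b else 0))]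
  rw [Finset.sum_ite_eq' Finset.univ m]
  simp

lemma fsum_root (T : PhyloTree) (K : Matrix (Fin T.n) (Fin T.n) ℂ) :
    fsum T K (T.leaf 0) = 0 := by
  rw [fsum]
  apply Finset.sum_eq_zero
  intro a _
  apply Finset.sum_eq_zero
  intro b _
  exact if_neg (T.lca_ne_root (Fin.succ_ne_zero a) (Fin.succ_ne_zero b))

lemma row_int (T : PhyloTree) (K : Matrix (Fin T.n) (Fin T.n) ℂ) (hK : K.IsSymm)
    (v : T.NR) (hv : v.1 ∉ Set.range T.leaf) :
    (Amat T ℂ *ᵥ pvec T K) v = -(s1 T K v.1) ∧ fsum T K v.1 = 2 * s1 T K v.1 := by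
  constructor
  · rw [row_eq]
    have h1 : (∑ a : Fin T.n, if v.1 = T.leaf a.succ then ∑ k, K a k else 0) = 0 := by
      apply Finset.sum_eq_zero
      intro a _
      exact if_neg (fun h => hv ⟨a.succ, h.symm⟩)
    rw [h1, zero_sub, s1]
    congr 1
    apply Finset.sum_congr rfl; intro a _
    apply Finset.sum_congr rfl; intro b _
    refine if_congr (and_congr_right fun _ => ?_) rfl rfl
    constructor
    · rintro (h | h | h)
      · exact absurd (⟨a.succ, h.symm⟩ : v.1 ∈ Set.range T.leaf) hv
      · exact absurd (⟨b.succ, h.symm⟩ : v.1 ∈ Set.range T.leaf) hv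
      · exact h.symm
    · intro h; exact Or.inr (Or.inr h.symm)
  · rw [fsum, s1]
    have pt : ∀ a b : Fin T.n, (if T.lca a.succ b.succ = v.1 then K a b else 0)
        = (if a < b ∧ T.lca a.succ b.succ = v.1 then K a b else 0)
          + (if b < a ∧ T.lca a.succ b.succ = v.1 then K a b else 0) := by
      intro a b
      by_cases hl : T.lca a.succ b.succ = v.1
      · rcases lt_trichotomy a b with h | h | h
        · rw [if_pos hl, if_pos ⟨h, hl⟩, if_neg (fun hh : _ ∧ _ => asymm h hh.1), add_zero]
        · exfalso
          subst h
          rw [T.lca_self] at hl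
          exact hv ⟨a.succ, hl⟩
        · rw [if_pos hl, if_neg (fun hh : _ ∧ _ => asymm h hh.1), if_pos ⟨h, hl⟩, zero_add]
      · rw [if_neg hl, if_neg (fun hh : _ ∧ _ => hl hh.2),
          if_neg (fun hh : _ ∧ _ => hl hh.2), add_zero]
    rw [Finset.sum_congr rfl (fun a _ => Finset.sum_congr rfl (fun b _ => pt a b))]
    rw [Finset.sum_congr rfl (fun a (_ : a ∈ Finset.univ) => Finset.sum_add_distrib),
      Finset.sum_add_distrib]
    have hswap : (∑ a : Fin T.n, ∑ b : Fin T.n,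
        if b < a ∧ T.lca a.succ b.succ = v.1 then K a b else 0)
        = ∑ a : Fin T.n, ∑ b : Fin T.n,
          if a < b ∧ T.lca a.succ b.succ = v.1 then K a b else 0 := by
      rw [Finset.sum_comm]
      apply Finset.sum_congr rfl; intro a _
      apply Finset.sum_congr rfl; intro b _
      rw [hK.apply b a, T.lca_symm b.succ a.succ]
    rw [hswap]
    ring

lemma mulvec_iff (T : PhyloTree) (K : Matrix (Fin T.n) (Fin T.n) ℂ) (hK : K.IsSymm) :
    Amat T ℂ *ᵥ pvec T K = 0 ↔ ∀ u : T.V, fsum T K u = 0 := by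
  constructor
  · intro h u
    by_cases hu : u ∈ Set.range T.leaf
    · obtain ⟨m, rfl⟩ := hu
      by_cases hm : m = 0
      · subst hm; exact fsum_root T K
      · set m' := m.pred hm with hm'
        have hms : m'.succ = m := Fin.succ_pred m hm
        have hne : T.leaf m ≠ T.leaf 0 := fun he => hm (T.leaf.injective he)
        have hrow := row_leaf T K hK ⟨T.leaf m, hne⟩ m' (by simp [hms])
        have h0 : (Amat T ℂ *ᵥ pvec T K) ⟨T.leaf m, hne⟩ = 0 := by
          rw [h]; rfl
        rw [← hms, fsum_leaf, ← hrow, h0]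
    · have hne : u ≠ T.leaf 0 := fun he => hu ⟨0, he.symm⟩
      obtain ⟨hrow, hfs⟩ := row_int T K hK ⟨u, hne⟩ hu
      have h0 : (Amat T ℂ *ᵥ pvec T K) ⟨u, hne⟩ = 0 := by rw [h]; rfl
      rw [h0] at hrow
      have : s1 T K u = 0 := by
        have := hrow.symm
        simpa using this
      rw [hfs, this, mul_zero]
  · intro hf
    funext v
    show (Amat T ℂ *ᵥ pvec T K) v = 0
    by_cases hv : v.1 ∈ Set.range T.leaf
    · obtain ⟨m, hm⟩ := hv
      have hm0 : m ≠ 0 := fun h => v.2 (by rw [← hm, h])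
      set m' := m.pred hm0 with hm'd
      have hms : m'.succ = m := Fin.succ_pred m hm0
      have hrow := row_leaf T K hK v m' (by rw [hms]; exact hm.symm)
      rw [hrow, ← fsum_leaf T K m', hms]
      exact hf _
    · obtain ⟨hrow, hfs⟩ := row_int T K hK v hv
      have : s1 T K v.1 = 0 := by
        have h2 := hf v.1
        rw [hfs] at h2
        have := mul_eq_zero.mp h2
        rcases this with h | h
        · exact absurd h (by norm_num)
        · exact h
      rw [hrow, this, neg_zero]

end PhyloAux
namespace PhyloAux

lemma pvec_sub (T : PhyloTree) (K W : Matrix (Fin T.n) (Fin T.n) ℂ) :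
    pvec T (K - W) = pvec T K - pvec T W := by
  funext s
  by_cases h : s.1.1 = 0 <;>
    simp [pvec, h, Matrix.sub_apply, Finset.sum_sub_distrib] <;> ring

end PhyloAux

/-- For every rooted tree `T` and every complex symmetric `n × n` matrix `K`, one has
`K ∈ L_T^⊥` iff `A_T · p(K) = 0`; consequently, for complex symmetric matrices `K` and
`W`, `K - W ∈ L_T^⊥` iff `A_T · p(K) = A_T · p(W)`. -/
theorem statement1 (T : PhyloTree) (K : Matrix (Fin T.n) (Fin T.n) ℂ) (hK : K.IsSymm) :
    (K ∈ LspacePerp T ↔ Amat T ℂ *ᵥ pvec T K = 0) ∧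
    (∀ W : Matrix (Fin T.n) (Fin T.n) ℂ, W.IsSymm →
      (K - W ∈ LspacePerp T ↔ Amat T ℂ *ᵥ pvec T K = Amat T ℂ *ᵥ pvec T W)) := by
  constructor
  · exact (PhyloAux.perp_iff T K hK).trans (PhyloAux.mulvec_iff T K hK).symm
  · intro W hW
    have hKW : (K - W).IsSymm := hK.sub hW
    have h1 := (PhyloAux.perp_iff T (K - W) hKW).trans
      (PhyloAux.mulvec_iff T (K - W) hKW).symm
    rw [h1, PhyloAux.pvec_sub, Matrix.mulVec_sub, sub_eq_zero]
end

section
/- For every rooted tree T, the all-ones row vector (indexed by the 2-element subsets of {0,…,n}) equals Σ_{i=1}^{n} a_T^i − Σ_{v ∈ Int(T)} a_T^v, where the first sum is over the non-root leaves of T and the second over the internal vertices of T; in particular, the all-ones vector lies in the ℚ-rowspan of A_T. -/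
attribute [local instance] Classical.propDecidable

lemma iterRoot (T : PhyloTree) (k : ℕ) : T.par^[k] (T.leaf 0) = T.leaf 0 :=
  Function.iterate_fixed T.par_root k

lemma lcaZero (T : PhyloTree) (j : Fin (T.n + 1)) : T.lca 0 j = T.leaf 0 := by
  obtain ⟨k, hk⟩ := T.lca_anc_left 0 j
  rw [iterRoot] at hk
  exact hk.symm

lemma leafNoPar (T : PhyloTree) {i : Fin (T.n + 1)} (hi : i ≠ 0) :
    ∀ u, T.par u ≠ T.leaf i := by
  have h0 : T.leaf i ≠ T.leaf 0 := fun h => hi (T.leaf.injective h)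
  exact (T.leaf_iff _ h0).mp ⟨i, rfl⟩

lemma ancLeafEq (T : PhyloTree) {i : Fin (T.n + 1)} (hi : i ≠ 0) {v : T.V} {k : ℕ}
    (h : T.par^[k] v = T.leaf i) : v = T.leaf i := by
  cases k with
  | zero => exact h
  | succ k =>
    rw [Function.iterate_succ_apply'] at h
    exact absurd h (leafNoPar T hi _)

lemma ancChild (T : PhyloTree) {u : T.V} (hu1 : u ≠ T.leaf 0) (hu2 : T.par u = T.leaf 0)
    (huniq : ∀ w, w ≠ T.leaf 0 ∧ T.par w = T.leaf 0 → w = u) :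
    ∀ k (v : T.V), T.par^[k] v = T.leaf 0 → v ≠ T.leaf 0 → ∃ m, T.par^[m] v = u := by
  intro k
  induction k with
  | zero => intro v hv hv0; exact absurd hv hv0
  | succ k ih =>
    intro v hv hv0
    rw [Function.iterate_succ_apply] at hv
    by_cases hp : T.par v = T.leaf 0
    · exact ⟨0, huniq v ⟨hv0, hp⟩⟩
    · obtain ⟨m, hm⟩ := ih (T.par v) hv hp
      exact ⟨m + 1, by rw [Function.iterate_succ_apply]; exact hm⟩

lemma lcaNeRoot (T : PhyloTree) {i j : Fin (T.n + 1)} (hi : i ≠ 0) (hj : j ≠ 0) :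
    T.lca i j ≠ T.leaf 0 := by
  obtain ⟨u, ⟨hu1, hu2⟩, huniq⟩ := T.root_unique_child
  have huniq' : ∀ w, w ≠ T.leaf 0 ∧ T.par w = T.leaf 0 → w = u := fun w hw => huniq w hw
  have hli : T.leaf i ≠ T.leaf 0 := fun h => hi (T.leaf.injective h)
  have hlj : T.leaf j ≠ T.leaf 0 := fun h => hj (T.leaf.injective h)
  obtain ⟨ki, hki⟩ := T.reaches_root (T.leaf i)
  obtain ⟨kj, hkj⟩ := T.reaches_root (T.leaf j)
  have hai := ancChild T hu1 hu2 huniq' ki (T.leaf i) hki hli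
  have haj := ancChild T hu1 hu2 huniq' kj (T.leaf j) hkj hlj
  obtain ⟨k, hk⟩ := T.lca_min i j u hai haj
  intro hroot
  rw [hroot, iterRoot] at hk
  exact hu1 hk.symm

lemma lcaNotLeaf (T : PhyloTree) {i j : Fin (T.n + 1)} (hi : i ≠ 0) (hj : j ≠ 0)
    (hij : i ≠ j) : T.lca i j ∉ Set.range T.leaf := by
  rintro ⟨m, hm⟩
  have hm0 : m ≠ 0 := by
    intro h; subst h
    exact lcaNeRoot T hi hj hm.symm
  obtain ⟨ki, hki⟩ := T.lca_anc_left i j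
  obtain ⟨kj, hkj⟩ := T.lca_anc_right i j
  rw [← hm] at hki hkj
  have h1 := ancLeafEq T hm0 hki
  have h2 := ancLeafEq T hm0 hkj
  exact hij (T.leaf.injective (h1.trans h2.symm))

/-- For every rooted tree `T`, the all-ones row vector indexed by the 2-element subsets
of `{0, …, n}` equals `∑_{i=1}^n a_T^i − ∑_{v ∈ Int(T)} a_T^v`, the first sum being over
the non-root leaves and the second over the internal vertices of `T`; in particular the
all-ones vector lies in the `ℚ`-rowspan of `A_T`. -/
theorem statement7 (T : PhyloTree) :
    ((fun _ => 1 : PairIdx T.n → ℚ) =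
      (∑ k ∈ Finset.univ.filter (fun k : T.NR => k.1 ∈ Set.range T.leaf), Amat T ℚ k)
      - ∑ k ∈ Finset.univ.filter (fun k : T.NR => k.1 ∉ Set.range T.leaf), Amat T ℚ k) ∧
    (fun _ => 1 : PairIdx T.n → ℚ) ∈ Submodule.span ℚ (Set.range (Amat T ℚ)) := by
  have heq : (fun _ => 1 : PairIdx T.n → ℚ) =
      (∑ k ∈ Finset.univ.filter (fun k : T.NR => k.1 ∈ Set.range T.leaf), Amat T ℚ k)
      - ∑ k ∈ Finset.univ.filter (fun k : T.NR => k.1 ∉ Set.range T.leaf), Amat T ℚ k := by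
    funext s
    obtain ⟨⟨i, j⟩, hij⟩ := s
    simp only [Pi.sub_apply, Finset.sum_apply (g := fun k => (Amat T ℚ k : PairIdx T.n → ℚ))]
    simp only [Amat, Matrix.of_apply]
    by_cases hi : i = 0
    · subst hi
      have hj0 : j ≠ 0 := hij.ne'
      have hlj : T.leaf j ≠ T.leaf 0 := fun h => hj0 (T.leaf.injective h)
      have hl : T.lca 0 j = T.leaf 0 := lcaZero T j
      have h1 : (∑ k ∈ Finset.univ.filter (fun k : T.NR => k.1 ∈ Set.range T.leaf),
          if k.1 = T.leaf 0 ∨ k.1 = T.leaf j ∨ k.1 = T.lca 0 j then (1:ℚ) else 0) = 1 := by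
        rw [Finset.sum_congr rfl (fun v _ => ?_), Finset.sum_ite_eq'
          (Finset.univ.filter (fun k : T.NR => k.1 ∈ Set.range T.leaf))
          (⟨T.leaf j, hlj⟩ : T.NR) (fun _ => (1:ℚ))]
        · rw [if_pos (Finset.mem_filter.mpr ⟨Finset.mem_univ _, ⟨j, rfl⟩⟩)]
        · congr 1
          simp only [eq_iff_iff]
          constructor
          · rintro (h | h | h)
            · exact absurd h v.2
            · exact Subtype.ext h
            · rw [hl] at h; exact absurd h v.2
          · rintro rfl; exact Or.inr (Or.inl rfl)
      have h2 : (∑ k ∈ Finset.univ.filter (fun k : T.NR => k.1 ∉ Set.range T.leaf),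
          if k.1 = T.leaf 0 ∨ k.1 = T.leaf j ∨ k.1 = T.lca 0 j then (1:ℚ) else 0) = 0 := by
        apply Finset.sum_eq_zero
        intro v hv
        have hvr := (Finset.mem_filter.mp hv).2
        rw [if_neg]
        rintro (h | h | h)
        · exact v.2 h
        · exact hvr ⟨j, h.symm⟩
        · rw [hl] at h; exact v.2 h
      rw [h1, h2]; norm_num
    · have hj0 : j ≠ 0 := by
        intro h; subst h; exact absurd hij (by simp)
      have hijne : i ≠ j := hij.ne
      have hli : T.leaf i ≠ T.leaf 0 := fun h => hi (T.leaf.injective h)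
      have hlj : T.leaf j ≠ T.leaf 0 := fun h => hj0 (T.leaf.injective h)
      have hLr := lcaNeRoot T hi hj0
      have hLnl := lcaNotLeaf T hi hj0 hijne
      set vi : T.NR := ⟨T.leaf i, hli⟩ with hvi
      set vj : T.NR := ⟨T.leaf j, hlj⟩ with hvj
      set vL : T.NR := ⟨T.lca i j, hLr⟩ with hvL
      have hvivj : vi ≠ vj := by
        intro h
        exact hijne (T.leaf.injective (congrArg Subtype.val h))
      have h1 : (∑ k ∈ Finset.univ.filter (fun k : T.NR => k.1 ∈ Set.range T.leaf),
          if k.1 = T.leaf i ∨ k.1 = T.leaf j ∨ k.1 = T.lca i j then (1:ℚ) else 0) = 2 := by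
        have step : ∀ v ∈ Finset.univ.filter (fun k : T.NR => k.1 ∈ Set.range T.leaf),
            (if v.1 = T.leaf i ∨ v.1 = T.leaf j ∨ v.1 = T.lca i j then (1:ℚ) else 0)
            = (if v = vi then (1:ℚ) else 0) + (if v = vj then (1:ℚ) else 0) := by
          intro v hv
          have hvr := (Finset.mem_filter.mp hv).2
          by_cases h1 : v = vi
          · subst h1
            rw [if_pos (Or.inl rfl), if_pos rfl, if_neg hvivj]; ring
          by_cases h2 : v = vj
          · subst h2
            rw [if_pos (Or.inr (Or.inl rfl)), if_neg (Ne.symm hvivj), if_pos rfl]; ring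
          rw [if_neg, if_neg h1, if_neg h2]
          · ring
          · rintro (h | h | h)
            · exact h1 (Subtype.ext h)
            · exact h2 (Subtype.ext h)
            · exact hLnl (h ▸ hvr)
        rw [Finset.sum_congr rfl step, Finset.sum_add_distrib,
          Finset.sum_ite_eq' _ vi (fun _ => (1:ℚ)),
          Finset.sum_ite_eq' _ vj (fun _ => (1:ℚ)),
          if_pos (Finset.mem_filter.mpr ⟨Finset.mem_univ _, ⟨i, rfl⟩⟩),
          if_pos (Finset.mem_filter.mpr ⟨Finset.mem_univ _, ⟨j, rfl⟩⟩)]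
        norm_num
      have h2 : (∑ k ∈ Finset.univ.filter (fun k : T.NR => k.1 ∉ Set.range T.leaf),
          if k.1 = T.leaf i ∨ k.1 = T.leaf j ∨ k.1 = T.lca i j then (1:ℚ) else 0) = 1 := by
        rw [Finset.sum_congr rfl (fun v hv => ?_), Finset.sum_ite_eq'
          (Finset.univ.filter (fun k : T.NR => k.1 ∉ Set.range T.leaf))
          vL (fun _ => (1:ℚ))]
        · simp only [Finset.mem_filter, Finset.mem_univ, true_and, Set.mem_range]
          rw [if_pos]
          exact fun ⟨x, h⟩ => hLnl ⟨x, h⟩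
        · have hvr := (Finset.mem_filter.mp hv).2
          congr 1
          simp only [eq_iff_iff]
          constructor
          · rintro (h | h | h)
            · exact absurd ⟨i, h.symm⟩ hvr
            · exact absurd ⟨j, h.symm⟩ hvr
            · exact Subtype.ext h
          · rintro rfl; exact Or.inr (Or.inr rfl)
      rw [h1, h2]; norm_num
  refine ⟨heq, ?_⟩
  rw [heq]
  exact Submodule.sub_mem _
    (Submodule.sum_mem _ fun k _ => Submodule.subset_span ⟨k, rfl⟩)
    (Submodule.sum_mem _ fun k _ => Submodule.subset_span ⟨k, rfl⟩)
end
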